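/- arXiv:2107.12047 — 4 statements merged into one kernel-verified Lean document; each statement's English description precedes it below -/
import Mathlib

section
/- Let $A$ be a finite set, $G$ a countable group, and $X \subseteq A^G$ a subshift of finite type. Then $X$ is splicable: there exists a finite subset $\Delta \subseteq G$ containing $1_G$ such that for any finite subset $B \subseteq G$ and any $x, y \in X$ with $x|_{B\Delta \setminus B} = y|_{B\Delta \setminus B}$, the configuration $z \in A^G$ defined by $z|_B = x|_B$ and $z|_{G \setminus B} = y|_{G \setminus B}$ belongs to $X$. -/
open Pointwise
theorem stmt_5 {A G : Type*} [Fintype A] [Group G] [Countable G] [DecidableEq G]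
    (Ω : Finset G) (𝒜 : Set (Ω → A))
    (X : Set (G → A))
    (hX : X = {x : G → A | ∀ g : G, (fun ω : Ω => x (g⁻¹ * (ω : G))) ∈ 𝒜}) :
    ∃ Δ : Finset G, (1 : G) ∈ Δ ∧
      ∀ (B : Finset G) (x y : G → A), x ∈ X → y ∈ X →
        (∀ g ∈ (B * Δ : Finset G) \ B, x g = y g) →
        (fun g : G => if g ∈ B then x g else y g) ∈ X := by
  subst hX
  refine ⟨insert 1 (Ω⁻¹ * Ω), Finset.mem_insert_self _ _, ?_⟩
  intro B x y hx hy hxy g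
  by_cases hc : ∃ ω : Ω, g⁻¹ * (ω : G) ∈ B
  · obtain ⟨ω0, hω0⟩ := hc
    have : (fun ω : Ω => (if g⁻¹ * (ω : G) ∈ B then x (g⁻¹ * ω) else y (g⁻¹ * ω)))
        = fun ω : Ω => x (g⁻¹ * (ω : G)) := by
      funext ω
      by_cases hω : g⁻¹ * (ω : G) ∈ B
      · simp [hω]
      · have hmem : g⁻¹ * (ω : G) ∈ (B * insert 1 (Ω⁻¹ * Ω) : Finset G) := by
          have h1 : (g⁻¹ * (ω0 : G)) * ((ω0 : G)⁻¹ * (ω : G)) = g⁻¹ * (ω : G) := by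
            group
          rw [← h1]
          exact Finset.mul_mem_mul hω0 (Finset.mem_insert_of_mem
            (Finset.mul_mem_mul (Finset.inv_mem_inv ω0.2) ω.2))
        have := hxy _ (Finset.mem_sdiff.mpr ⟨hmem, hω⟩)
        simp [hω, this]
    simpa [this] using hx g
  · push_neg at hc
    have : (fun ω : Ω => (if g⁻¹ * (ω : G) ∈ B then x (g⁻¹ * ω) else y (g⁻¹ * ω)))
        = fun ω : Ω => y (g⁻¹ * (ω : G)) := by
      funext ω
      simp [hc ω]
    simpa [this] using hy g
end

section
/- Let $G$ be a group, $F \subseteq G$ finite nonempty with $1_G \notin F$, and let $X_{\mathrm{hard},F} = \{x \in \{0,1\}^G : x(g)x(gs) = 0 \text{ for all } g \in G, s \in F\}$. Then $X_{\mathrm{hard},F}$ is strongly irreducible: there is a finite subset $\Delta \subseteq G$ containing $1_G$ such that for any finite $A_1, A_2 \subseteq G$ with $A_1 \Delta \cap A_2 = \varnothing$ and any $x_1, x_2 \in X_{\mathrm{hard},F}$, there exists $z \in X_{\mathrm{hard},F}$ with $z|_{A_1} = x_1|_{A_1}$ and $z|_{A_2} = x_2|_{A_2}$. -/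
open Pointwise

theorem stmt_7 {G : Type*} [Group G] [DecidableEq G] (F : Finset G) (hF : F.Nonempty)
    (h1 : (1 : G) ∉ F)
    (X : Set (G → Bool))
    (hX : X = {x : G → Bool | ∀ g : G, ∀ s ∈ F, ¬(x g = true ∧ x (g * s) = true)}) :
    ∃ Δ : Finset G, (1 : G) ∈ Δ ∧
      ∀ (A₁ A₂ : Finset G), (A₁ * Δ : Finset G) ∩ A₂ = ∅ →
        ∀ x₁ ∈ X, ∀ x₂ ∈ X, ∃ z ∈ X,
          (∀ g ∈ A₁, z g = x₁ g) ∧ (∀ g ∈ A₂, z g = x₂ g) := by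
  refine ⟨{1} ∪ F ∪ F⁻¹, by simp, ?_⟩
  intro A₁ A₂ hdisj x₁ hx₁ x₂ hx₂
  subst hX
  have hMem : ∀ a ∈ A₁, ∀ d ∈ ({1} ∪ F ∪ F⁻¹ : Finset G), a * d ∉ A₂ := by
    intro a ha d hd hmem
    have : a * d ∈ (A₁ * ({1} ∪ F ∪ F⁻¹) : Finset G) ∩ A₂ :=
      Finset.mem_inter.2 ⟨Finset.mul_mem_mul ha hd, hmem⟩
    exact Finset.eq_empty_iff_forall_notMem.1 hdisj _ this
  refine ⟨fun g => if g ∈ A₁ then x₁ g else if g ∈ A₂ then x₂ g else false, ?_, ?_, ?_⟩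
  · intro g s hs
    rintro ⟨hg, hgs⟩
    by_cases h1' : g ∈ A₁
    · simp only [h1'] at hg
      by_cases h2' : g * s ∈ A₁
      · simp only [h2'] at hgs
        exact hx₁ g s hs ⟨hg, hgs⟩
      · have : g * s ∉ A₂ := hMem g h1' s (by simp [hs])
        simp [h2', this] at hgs
    · by_cases h1'' : g ∈ A₂
      · simp only [h1', h1'', if_neg, if_pos] at hg
        by_cases h2' : g * s ∈ A₁
        · have : (g * s) * s⁻¹ ∉ A₂ := hMem (g * s) h2' s⁻¹ (by simp [hs])
          simp at this
          exact this h1''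
        · by_cases h2'' : g * s ∈ A₂
          · simp only [h2', h2'', if_neg, if_pos] at hgs
            exact hx₂ g s hs ⟨hg, hgs⟩
          · simp [h2', h2''] at hgs
      · simp [h1', h1''] at hg
  · intro g hg; simp [hg]
  · intro g hg
    have : g ∉ A₁ := by
      intro h
      have := hMem g h 1 (by simp)
      simp at this
      exact this hg
    simp [this, hg]
end

section
/- Let $A = \{0, 1, 2\}$, $G = \mathbb{Z}$, and let $X \subseteq A^{\mathbb{Z}}$ be the subshift consisting of all $x : \mathbb{Z} \to A$ such that for every $n \in \mathbb{Z}$, the pair $(x(n), x(n+1))$ belongs to $\{(0,0), (0,1), (1,1), (1,2), (2,2)\}$. Define $f : A^{\mathbb{Z}} \to A^{\mathbb{Z}}$ by $f(x)(n) = 1$ if $(x(n-1), x(n)) = (1,2)$ and $f(x)(n) = x(n)$ otherwise. Then $f(X) \subseteq X$, $f$ restricted to $X$ is injective, shift-equivariant, and continuous, but $f(X) \neq X$; hence $(X, \mathbb{Z})$ is not surjunctive. -/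
private def S8 : Set (Fin 3 × Fin 3) := {(0,0), (0,1), (1,1), (1,2), (2,2)}

private def F8 : (ℤ → Fin 3) → (ℤ → Fin 3) :=
  fun x n => if x (n - 1) = 1 ∧ x n = 2 then 1 else x n

private lemma step2 (x : ℤ → Fin 3)
    (hx : ∀ n : ℤ, (x n, x (n + 1)) ∈ S8) (n : ℤ) (h : x n = 2) : x (n+1) = 2 := by
  have := hx n
  simp only [S8, Set.mem_insert_iff, Set.mem_singleton_iff, Prod.mk.injEq, h] at this
  rcases this with ⟨h1,_⟩|⟨h1,_⟩|⟨h1,_⟩|⟨h1,_⟩|⟨_,h2⟩ <;> first | exact h2 | exact absurd h1 (by decide)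

-- asymmetric helper for injectivity
private lemma inj_helper (x x' : ℤ → Fin 3)
    (hx : ∀ n : ℤ, (x n, x (n + 1)) ∈ S8)
    (heq : F8 x = F8 x') (n : ℤ)
    (h1 : x (n-1) = 1) (h2 : x n = 2) (h3 : x' n ≠ 2) : False := by
  have e1 := congrFun heq n
  have e2 := congrFun heq (n+1)
  have hx1 : x (n+1) = 2 := step2 x hx n h2
  have hfx : F8 x n = 1 := by simp [F8, h1, h2]
  have hfx1 : F8 x (n+1) = 2 := by
    simp only [F8, add_sub_cancel_right, h2]
    simp [hx1]
  have hx'n : x' n = 1 := by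
    rw [hfx] at e1
    simp only [F8] at e1
    split_ifs at e1 with hc
    · exact absurd hc.2 h3
    · exact e1.symm
  rw [hfx1] at e2
  simp only [F8, add_sub_cancel_right, hx'n] at e2
  split_ifs at e2 with hc
  · exact absurd e2 (by decide)
  · simp only [not_and, forall_const] at hc
    rw [← e2] at hc
    exact hc rfl

theorem stmt_8
    (X : Set (ℤ → Fin 3))
    (hX : X = {x : ℤ → Fin 3 | ∀ n : ℤ,
      (x n, x (n + 1)) ∈ ({(0,0), (0,1), (1,1), (1,2), (2,2)} : Set (Fin 3 × Fin 3))})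
    (f : (ℤ → Fin 3) → (ℤ → Fin 3))
    (hf : f = fun x n => if x (n - 1) = 1 ∧ x n = 2 then 1 else x n) :
    f '' X ⊆ X ∧
    Set.InjOn f X ∧
    (∀ (g : ℤ), ∀ x ∈ X, f (fun h => x (h - g)) = fun h => f x (h - g)) ∧
    ContinuousOn f X ∧
    f '' X ≠ X := by
  have hX' : X = {x : ℤ → Fin 3 | ∀ n : ℤ, (x n, x (n + 1)) ∈ S8} := hX
  have hf' : f = F8 := hf
  subst hX' hf'
  refine ⟨?_, ?_, ?_, ?_, ?_⟩
  · -- image subset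
    rintro _ ⟨x, hx, rfl⟩ n
    have ha := hx (n-1)
    rw [sub_add_cancel] at ha
    have hb := hx n
    simp only [S8, Set.mem_insert_iff, Set.mem_singleton_iff, Prod.mk.injEq] at ha hb ⊢
    simp only [F8, add_sub_cancel_right]
    generalize x (n-1) = a at ha
    generalize x n = b at ha hb ⊢
    generalize x (n+1) = c at hb
    fin_cases a <;> fin_cases b <;> fin_cases c <;> simp_all
  · -- injectivity
    intro x hx x' hx' heq
    funext n
    by_contra hne
    have e1 := congrFun heq n
    simp only [F8] at e1
    split_ifs at e1 with hc hc' hc'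
    · exact hne (hc.2.trans hc'.2.symm)
    · exact inj_helper x x' hx heq n hc.1 hc.2 (by rw [← e1]; decide)
    · exact inj_helper x' x hx' heq.symm n hc'.1 hc'.2 (by rw [e1]; decide)
    · exact hne e1
  · -- equivariance
    intro g x _
    funext n
    simp only [F8]
    have : n - 1 - g = n - g - 1 := by ring
    rw [this]
  · -- continuity
    apply Continuous.continuousOn
    apply continuous_pi
    intro n
    have : Continuous fun x : ℤ → Fin 3 => (x (n-1), x n) :=
      (continuous_apply _).prodMk (continuous_apply _)
    exact (continuous_of_discreteTopology
      (f := fun p : Fin 3 × Fin 3 => if p.1 = 1 ∧ p.2 = 2 then (1 : Fin 3) else p.2)).comp this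
  · -- not surjective
    intro h
    set y : ℤ → Fin 3 := fun n => if n ≤ -1 then 0 else if n = 0 then 1 else 2 with hy
    have hyX : y ∈ {x : ℤ → Fin 3 | ∀ n : ℤ, (x n, x (n + 1)) ∈ S8} := by
      intro n
      simp only [hy, S8, Set.mem_insert_iff, Set.mem_singleton_iff, Prod.mk.injEq]
      split_ifs <;> simp_all <;> omega
    rw [← h] at hyX
    obtain ⟨x, hx, hfx⟩ := hyX
    have h1 : F8 x 1 = 2 := by rw [hfx]; simp [hy]
    have h0 : F8 x 0 = 1 := by rw [hfx]; simp [hy]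
    have hx1 : x 1 = 2 := by
      simp only [F8] at h1
      split_ifs at h1 with hc
      · exact absurd h1 (by decide)
      · exact h1
    simp only [F8] at h0
    split_ifs at h0 with hc
    · -- x (-1) = 1, x 0 = 2 : then F8 x (-1) should be 0 but is x(-1)=1
      rw [show (0:ℤ)-1 = -1 from by norm_num] at hc
      have hm := congrFun hfx (-1)
      simp only [F8] at hm
      have : ((-1 : ℤ)) ≤ -1 := le_refl _
      simp only [hy, if_pos this] at hm
      split_ifs at hm with hc2
      · exact absurd hm (by decide)
      · rw [hc.1] at hm; exact absurd hm (by decide)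
    · -- x 0 = 1, x 1 = 2 : then F8 x 1 = 1 ≠ 2
      simp only [F8] at h1
      have : (1:ℤ) - 1 = 0 := by norm_num
      rw [this, h0] at h1
      rw [if_pos ⟨rfl, hx1⟩] at h1
      exact absurd h1 (by decide)
end

section
/- Let $A$ be a finite set, $G$ a countable group, and $X \subseteq A^G$ a subshift. If $X$ is splicable (i.e., there exists finite $\Delta \ni 1_G$ such that for any finite $B \subseteq G$ and $x, y \in X$ with $x|_{B\Delta \setminus B} = y|_{B\Delta \setminus B}$, the configuration agreeing with $x$ on $B$ and with $y$ on $G \setminus B$ lies in $X$), then $(X, G)$ satisfies the strong topological Markov property. -/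
open Pointwise

theorem stmt_12 {A G : Type*} [Fintype A] [TopologicalSpace A] [DiscreteTopology A]
    [Group G] [Countable G] [DecidableEq G]
    (Ω : ℕ → Finset G)
    (hΩ0 : Ω 0 = ∅) (hΩ1 : Ω 1 = {1})
    (hΩsym : ∀ n, ∀ g : G, g ∈ Ω n ↔ g⁻¹ ∈ Ω n)
    (hΩmono : ∀ n, Ω n ⊆ Ω (n + 1))
    (hΩexh : ∀ g : G, ∃ n, g ∈ Ω n)
    (ρ : (G → A) → (G → A) → ℝ)
    (hρeq : ∀ x : G → A, ρ x x = 0)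
    (hρ : ∀ (x y : G → A) (n : ℕ), x ≠ y →
      (∀ g ∈ Ω n, x g = y g) → ¬ (∀ g ∈ Ω (n + 1), x g = y g) →
      ρ x y = (2 : ℝ) ^ (-(n : ℤ)))
    (X : Set (G → A)) (hXcl : IsClosed X)
    (hXinv : ∀ (g : G), ∀ x ∈ X, (fun h : G => x (g⁻¹ * h)) ∈ X)
    (hsplice : ∃ Δ : Finset G, (1 : G) ∈ Δ ∧
      ∀ (B : Finset G) (x y : G → A), x ∈ X → y ∈ X →
        (∀ g ∈ (B * Δ : Finset G) \ B, x g = y g) →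
        (fun g : G => if g ∈ B then x g else y g) ∈ X) :
    ∀ ε : ℝ, 0 < ε → ∃ δ : ℝ, 0 < δ ∧ ∃ F : Finset G, (1 : G) ∈ F ∧
      ∀ (B : Finset G) (x y : G → A), x ∈ X → y ∈ X →
        (∀ s ∈ (F * B : Finset G) \ B,
          ρ (fun h => x (s⁻¹ * h)) (fun h => y (s⁻¹ * h)) ≤ δ) →
        ∃ z ∈ X,
          (∀ s ∈ (F * B : Finset G),
            ρ (fun h => z (s⁻¹ * h)) (fun h => x (s⁻¹ * h)) ≤ ε) ∧
          (∀ s : G, s ∉ B →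
            ρ (fun h => z (s⁻¹ * h)) (fun h => y (s⁻¹ * h)) ≤ ε) := by
  classical
  -- monotonicity of Ω
  have hmono : ∀ {i j : ℕ}, i ≤ j → Ω i ⊆ Ω j := by
    intro i j h
    induction h with
    | refl => exact fun _ hg => hg
    | step _ ih => exact fun g hg => hΩmono _ (ih hg)
  -- characterization of the metric
  have hchar : ∀ (u v : G → A) (n : ℕ),
      ρ u v ≤ (2 : ℝ) ^ (-(n : ℤ)) ↔ ∀ g ∈ Ω n, u g = v g := by
    intro u v n
    by_cases huv : u = v
    · subst huv
      constructor
      · exact fun _ g _ => rfl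
      · intro _; rw [hρeq]; positivity
    · have hex : ∃ m, ¬ ∀ g ∈ Ω m, u g = v g := by
        obtain ⟨g, hg⟩ := Function.ne_iff.mp huv
        obtain ⟨m, hm⟩ := hΩexh g
        exact ⟨m, fun h => hg (h g hm)⟩
      set N := Nat.find hex with hNdef
      have hN : ¬ ∀ g ∈ Ω N, u g = v g := Nat.find_spec hex
      have hNpos : 0 < N := by
        rcases Nat.eq_zero_or_pos N with h | h
        · exact absurd (fun g hg => by rw [h, hΩ0] at hg; exact absurd hg (by simp)) hN
        · exact h
      have hagree : ∀ g ∈ Ω (N - 1), u g = v g :=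
        not_not.mp (Nat.find_min hex (Nat.sub_lt hNpos one_pos))
      have hval : ρ u v = (2 : ℝ) ^ (-((N - 1 : ℕ) : ℤ)) := by
        refine hρ u v (N - 1) huv hagree ?_
        rwa [Nat.sub_add_cancel hNpos]
      constructor
      · intro hle g hg
        rw [hval] at hle
        have : (n : ℤ) ≤ ((N - 1 : ℕ) : ℤ) := by
          have := (zpow_le_zpow_iff_right₀ (by norm_num : (1:ℝ) < 2)).mp hle
          omega
        exact hagree g (hmono (by exact_mod_cast this) hg)
      · intro h
        have hlt : n < N := by
          by_contra h'
          push_neg at h'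
          exact hN fun g hg => h g (hmono h' hg)
        rw [hval]
        refine zpow_le_zpow_right₀ one_le_two ?_
        omega
    -- end hchar
  intro ε hε
  obtain ⟨n0, hn0⟩ : ∃ n : ℕ, (2 : ℝ) ^ (-(n : ℤ)) < ε := by
    obtain ⟨n, hn⟩ := exists_pow_lt_of_lt_one hε (by norm_num : (1/2 : ℝ) < 1)
    exact ⟨n, by rw [zpow_neg, zpow_natCast]; rwa [one_div, inv_pow] at hn⟩
  set n := n0 + 1 with hn_def
  have hεn : (2 : ℝ) ^ (-(n : ℤ)) ≤ ε := by
    refine le_of_lt (lt_of_le_of_lt ?_ hn0)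
    refine zpow_le_zpow_right₀ one_le_two ?_
    omega
  set E := Ω n with hE_def
  have h1E : (1 : G) ∈ E := hmono (by omega : 1 ≤ n) (by rw [hΩ1]; exact Finset.mem_singleton_self 1)
  have hEsym : ∀ g : G, g ∈ E → g⁻¹ ∈ E := fun g hg => (hΩsym n g).mp hg
  obtain ⟨Δ, h1Δ, hΔ⟩ := hsplice
  refine ⟨(2 : ℝ) ^ (-(n : ℤ)), by positivity, (E ∪ Δ⁻¹) * E, ?_, ?_⟩
  · have : (1 : G) * 1 ∈ (E ∪ Δ⁻¹) * E :=
      Finset.mul_mem_mul (Finset.mem_union_left _ h1E) h1E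
    simpa using this
  intro B x y hx hy hxy
  set F := (E ∪ Δ⁻¹) * E with hF_def
  set C : Finset G := B⁻¹ * E with hC_def
  set z : G → A := fun g => if g ∈ C then x g else y g with hz_def
  -- translated hypothesis: agreement near boundary
  have hagree : ∀ s ∈ (F * B : Finset G), s ∉ B → ∀ g ∈ E, x (s⁻¹ * g) = y (s⁻¹ * g) := by
    intro s hs hsB g hg
    exact (hchar _ _ n).mp (hxy s (Finset.mem_sdiff.mpr ⟨hs, hsB⟩)) g hg
  have hzX : z ∈ X := by
    refine hΔ C x y hx hy ?_
    intro g hg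
    rw [Finset.mem_sdiff] at hg
    obtain ⟨hg1, hg2⟩ := hg
    rw [Finset.mem_mul] at hg1
    obtain ⟨c, hc, δ₀, hδ₀, hcδ⟩ := hg1
    rw [hC_def, Finset.mem_mul] at hc
    obtain ⟨b', hb', e, he, hbe⟩ := hc
    rw [Finset.mem_inv] at hb'
    obtain ⟨b, hb, rfl⟩ := hb'
    -- g = b⁻¹ * e * δ₀ ; take s = g⁻¹
    have hsF : g⁻¹ ∈ (F * B : Finset G) := by
      rw [Finset.mem_mul]
      refine ⟨δ₀⁻¹ * e⁻¹, ?_, b, hb, ?_⟩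
      · exact Finset.mul_mem_mul (Finset.mem_union_right _ (Finset.inv_mem_inv hδ₀)) (hEsym e he)
      · rw [← hcδ, ← hbe]; group
    have hsB : g⁻¹ ∉ B := by
      intro hgB
      have : g⁻¹⁻¹ * 1 ∈ (B⁻¹ * E : Finset G) :=
        Finset.mul_mem_mul (Finset.inv_mem_inv hgB) h1E
      exact hg2 (by simpa using this)
    have := hagree g⁻¹ hsF hsB 1 h1E
    simpa using this
  refine ⟨z, hzX, ?_, ?_⟩
  · -- s ∈ F * B : z close to x
    intro s hs
    refine le_trans ((hchar _ _ n).mpr ?_) hεn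
    intro g hg
    by_cases hsB : s ∈ B
    · have : s⁻¹ * g ∈ C := by
        rw [hC_def, Finset.mem_mul]
        exact ⟨s⁻¹, by simpa using Finset.inv_mem_inv hsB, g, hg, rfl⟩
      simp only [hz_def, if_pos this]
    · have hxy' := hagree s hs hsB g hg
      by_cases hC : s⁻¹ * g ∈ C
      · simp only [hz_def, if_pos hC]
      · simp only [hz_def, if_neg hC]; exact hxy'.symm
  · -- s ∉ B : z close to y
    intro s hsB
    refine le_trans ((hchar _ _ n).mpr ?_) hεn
    intro g hg
    by_cases hC : s⁻¹ * g ∈ C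
    · -- s⁻¹ g = b⁻¹ e, so s ∈ F*B \ B and x = y there
      rw [hC_def, Finset.mem_mul] at hC
      obtain ⟨b', hb', e, he, hbe⟩ := hC
      rw [Finset.mem_inv] at hb'
      obtain ⟨b, hb, rfl⟩ := hb'
      have hsF : s ∈ (F * B : Finset G) := by
        rw [Finset.mem_mul]
        refine ⟨g * e⁻¹, ?_, b, hb, ?_⟩
        · exact Finset.mul_mem_mul (Finset.mem_union_left _ hg) (hEsym e he)
        · have hs2 : s * (b⁻¹ * e) = g := by rw [hbe]; group
          rw [← hs2]; group
      have hxy' := hagree s hsF hsB g hg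
      have hxC : s⁻¹ * g ∈ C := by
        rw [hC_def, Finset.mem_mul]
        exact ⟨b⁻¹, by simpa using Finset.inv_mem_inv hb, e, he, hbe⟩
      simp only [hz_def, if_pos hxC]
      exact hxy'
    · simp only [hz_def, if_neg hC]
end
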